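/- Let p be a positive integer, q an integer coprime to p, and k a natural number. Then (1/p) · ∑_{l=1}^{p} exp(2πi·k·q·l²/p) = 1 if and only if p divides k. (Consequently p is recovered from the family of invariants as the smallest positive k for which the invariant equals 1.) -/

import Mathlib

open Complex Finset

theorem normalized_gauss_sum_eq_one_iff_dvd (p : ℕ) (hp : 0 < p) (q : ℤ)
    (hq : IsCoprime q (p : ℤ)) (k : ℕ) :
    (1 / (p : ℂ)) *
        (∑ l ∈ Finset.Icc 1 p,
          Complex.exp (2 * Real.pi * Complex.I * (k : ℂ) * (q : ℂ) * (l : ℂ) ^ 2 / (p : ℂ))) = 1 ↔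
      p ∣ k := by
  have hp0 : (p : ℂ) ≠ 0 := by exact_mod_cast hp.ne'
  have hcard : (Finset.Icc 1 p).card = p := by
    rw [Nat.card_Icc]; omega
  constructor
  · intro h
    have hsum : (∑ l ∈ Finset.Icc 1 p,
        Complex.exp (2 * Real.pi * Complex.I * (k : ℂ) * (q : ℂ) * (l : ℂ) ^ 2 / (p : ℂ)))
        = (p : ℂ) := by
      field_simp at h
      exact h
    -- each term has real part ≤ 1
    have habs : ∀ l ∈ Finset.Icc 1 p,
        ‖Complex.exp (2 * Real.pi * Complex.I * (k : ℂ) * (q : ℂ) * (l : ℂ) ^ 2 / (p : ℂ))‖ = 1 := by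
      intro l _
      rw [Complex.norm_exp]
      have : (2 * Real.pi * Complex.I * (k : ℂ) * (q : ℂ) * (l : ℂ) ^ 2 / (p : ℂ)).re = 0 := by
        have : 2 * Real.pi * Complex.I * (k : ℂ) * (q : ℂ) * (l : ℂ) ^ 2 / (p : ℂ)
            = ((2 * Real.pi * k * q * (l : ℝ) ^ 2 / p : ℝ) : ℂ) * Complex.I := by
          push_cast
          ring
        rw [this, Complex.mul_I_re, Complex.ofReal_im, neg_zero]
      rw [this, Real.exp_zero]
    have hre : ∀ l ∈ Finset.Icc 1 p,
        (Complex.exp (2 * Real.pi * Complex.I * (k : ℂ) * (q : ℂ) * (l : ℂ) ^ 2 / (p : ℂ))).re ≤ 1 := by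
      intro l hl
      calc (Complex.exp _).re ≤ ‖Complex.exp (2 * Real.pi * Complex.I * (k : ℂ) * (q : ℂ) * (l : ℂ) ^ 2 / (p : ℂ))‖ := Complex.re_le_norm _
        _ = 1 := habs l hl
    have hresum : (∑ l ∈ Finset.Icc 1 p,
        (Complex.exp (2 * Real.pi * Complex.I * (k : ℂ) * (q : ℂ) * (l : ℂ) ^ 2 / (p : ℂ))).re)
        = ∑ l ∈ Finset.Icc 1 p, (1 : ℝ) := by
      rw [← Complex.re_sum, hsum]
      simp [hcard]
    have hall := (Finset.sum_eq_sum_iff_of_le hre).1 hresum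
    have h1 : (1 : ℕ) ∈ Finset.Icc 1 p := Finset.mem_Icc.2 ⟨le_refl 1, hp⟩
    have hre1 := hall 1 h1
    have habs1 := habs 1 h1
    set z := Complex.exp (2 * Real.pi * Complex.I * (k : ℂ) * (q : ℂ) * ((1 : ℕ) : ℂ) ^ 2 / (p : ℂ)) with hz
    have hz1 : z = 1 := by
      have hnorm : Complex.normSq z = 1 := by
        rw [← Complex.sq_norm, habs1]; norm_num
      have him : z.im = 0 := by
        have : z.re ^ 2 + z.im ^ 2 = 1 := by
          rw [← hnorm]; simp [Complex.normSq_apply]; ring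
        nlinarith [this, hre1]
      apply Complex.ext
      · exact hre1
      · simp [him]
    rw [Complex.exp_eq_one_iff] at hz1
    obtain ⟨n, hn⟩ := hz1
    have : ((k : ℂ) * q) = n * p := by
      have h2pi : (2 * (Real.pi : ℂ) * Complex.I) ≠ 0 := by
        simp [Real.pi_ne_zero, Complex.I_ne_zero]
      field_simp at hn
      have : (k : ℂ) * q * (2 * (Real.pi : ℂ) * Complex.I) = n * p * (2 * (Real.pi : ℂ) * Complex.I) := by
        linear_combination (2 * (Real.pi : ℂ) * Complex.I) * hn
      exact mul_right_cancel₀ h2pi this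
    have hint : (k : ℤ) * q = n * p := by exact_mod_cast this
    have hdvd : (p : ℤ) ∣ (k : ℤ) * q := ⟨n, by linarith [hint]⟩
    have : (p : ℤ) ∣ (k : ℤ) := hq.symm.dvd_of_dvd_mul_right hdvd
    exact_mod_cast this
  · rintro ⟨m, rfl⟩
    have hterm : ∀ l ∈ Finset.Icc 1 p,
        Complex.exp (2 * Real.pi * Complex.I * ((p * m : ℕ) : ℂ) * (q : ℂ) * (l : ℂ) ^ 2 / (p : ℂ)) = 1 := by
      intro l _
      have : 2 * Real.pi * Complex.I * ((p * m : ℕ) : ℂ) * (q : ℂ) * (l : ℂ) ^ 2 / (p : ℂ)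
          = ((m * q * (l : ℤ) ^ 2 : ℤ) : ℂ) * (2 * Real.pi * Complex.I) := by
        push_cast
        field_simp
      rw [this, Complex.exp_int_mul_two_pi_mul_I]
    rw [Finset.sum_congr rfl hterm]
    simp [hcard]
    field_simp
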